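/- Let m ≤ M < 0 be real numbers, let c > 0 and c' > 0, and let f : ℝ → ℝ be differentiable on [m,M] with f'(x) ≤ −c and |f'(x)| ≤ c' for all x ∈ [m,M]. Let T > 0 and let S₋, S₊ : ℝ → ℝ be differentiable on [0,T] with m ≤ S₋(t) ≤ S₊(t) ≤ M for all t ∈ [0,T], and suppose (S₊ − S₋)'(t) ≤ M·(f(S₋(t)) − f(S₊(t))) for all t ∈ [0,T]. Set B := −c·M > 0 and C := c'·(S₊(0) − S₋(0)). Then: (i) S₊(t) − S₋(t) ≤ (S₊(0) − S₋(0))·e^{−Bt} for all t ∈ [0,T]; and (ii) for every t ∈ [0,T] and all real numbers s, a with S₋(t) ≤ s ≤ S₊(t) and f(S₊(t)) ≤ a ≤ f(S₋(t)), one has |f(s) − a| ≤ C·e^{−Bt}. -/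

import Mathlib

open Set

/-- Mean value bounds: for `x ≤ y` in `[m,M]`, `c*(y-x) ≤ f x - f y ≤ c'*(y-x)`. -/
lemma mvt_aux (m M c c' : ℝ) (f f' : ℝ → ℝ)
    (hf : ∀ x ∈ Set.Icc m M, HasDerivAt f (f' x) x)
    (hf'le : ∀ x ∈ Set.Icc m M, f' x ≤ -c)
    (hf'abs : ∀ x ∈ Set.Icc m M, |f' x| ≤ c')
    {x y : ℝ} (hx : x ∈ Set.Icc m M) (hy : y ∈ Set.Icc m M) (hxy : x ≤ y) :
    c * (y - x) ≤ f x - f y ∧ f x - f y ≤ c' * (y - x) := by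
  rcases eq_or_lt_of_le hxy with rfl | hlt
  · simp
  · have hsub : Set.Icc x y ⊆ Set.Icc m M := Set.Icc_subset_Icc hx.1 hy.2
    have hcont : ContinuousOn f (Set.Icc x y) := fun z hz =>
      (hf z (hsub hz)).continuousAt.continuousWithinAt
    have hderiv : ∀ z ∈ Set.Ioo x y, HasDerivAt f (f' z) z := fun z hz =>
      hf z (hsub (Set.Ioo_subset_Icc_self hz))
    obtain ⟨ξ, hξ, hslope⟩ := exists_hasDerivAt_eq_slope f f' hlt hcont hderiv
    have hξmM : ξ ∈ Set.Icc m M := hsub (Set.Ioo_subset_Icc_self hξ)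
    have hpos : 0 < y - x := sub_pos.2 hlt
    have h1 : f' ξ ≤ -c := hf'le ξ hξmM
    have h2 : -c' ≤ f' ξ := (abs_le.1 (hf'abs ξ hξmM)).1
    have heq : f y - f x = f' ξ * (y - x) := by
      rw [eq_div_iff hpos.ne'] at hslope
      linarith [hslope]
    constructor
    · nlinarith
    · nlinarith

/-- Exponential decay of the scalar-curvature oscillation and of `|f(S) - A|` in the
scalar-negative case. -/
theorem stmt_2 (m M c c' : ℝ) (hmM : m ≤ M) (hM : M < 0) (hc : 0 < c) (hc' : 0 < c')
    (f f' : ℝ → ℝ)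
    (hf : ∀ x ∈ Set.Icc m M, HasDerivAt f (f' x) x)
    (hf'le : ∀ x ∈ Set.Icc m M, f' x ≤ -c)
    (hf'abs : ∀ x ∈ Set.Icc m M, |f' x| ≤ c')
    (T : ℝ) (hT : 0 < T)
    (Sm Sp Sm' Sp' : ℝ → ℝ)
    (hSm : ∀ t ∈ Set.Icc (0:ℝ) T, HasDerivAt Sm (Sm' t) t)
    (hSp : ∀ t ∈ Set.Icc (0:ℝ) T, HasDerivAt Sp (Sp' t) t)
    (hbound : ∀ t ∈ Set.Icc (0:ℝ) T, m ≤ Sm t ∧ Sm t ≤ Sp t ∧ Sp t ≤ M)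
    (hineq : ∀ t ∈ Set.Icc (0:ℝ) T, Sp' t - Sm' t ≤ M * (f (Sm t) - f (Sp t))) :
    (∀ t ∈ Set.Icc (0:ℝ) T,
      Sp t - Sm t ≤ (Sp 0 - Sm 0) * Real.exp (-(-c * M) * t)) ∧
    (∀ t ∈ Set.Icc (0:ℝ) T, ∀ s a : ℝ,
      Sm t ≤ s → s ≤ Sp t → f (Sp t) ≤ a → a ≤ f (Sm t) →
      |f s - a| ≤ (c' * (Sp 0 - Sm 0)) * Real.exp (-(-c * M) * t)) := by
  have h0T : (0:ℝ) ∈ Set.Icc (0:ℝ) T := ⟨le_refl 0, hT.le⟩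
  have hSmmem : ∀ t ∈ Set.Icc (0:ℝ) T, Sm t ∈ Set.Icc m M := fun t ht =>
    ⟨(hbound t ht).1, le_trans (hbound t ht).2.1 (hbound t ht).2.2⟩
  have hSpmem : ∀ t ∈ Set.Icc (0:ℝ) T, Sp t ∈ Set.Icc m M := fun t ht =>
    ⟨le_trans (hbound t ht).1 (hbound t ht).2.1, (hbound t ht).2.2⟩
  set g : ℝ → ℝ := fun t => (Sp t - Sm t) * Real.exp (-(c * M) * t) with hg
  have hganti : AntitoneOn g (Set.Icc (0:ℝ) T) := by
    have hgd : ∀ t ∈ Set.Icc (0:ℝ) T,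
        HasDerivAt g ((Sp' t - Sm' t) * Real.exp (-(c * M) * t)
          + (Sp t - Sm t) * (-(c * M) * Real.exp (-(c * M) * t))) t := by
      intro t ht
      have h1 : HasDerivAt (fun t => Sp t - Sm t) (Sp' t - Sm' t) t :=
        (hSp t ht).sub (hSm t ht)
      have h2 : HasDerivAt (fun t => Real.exp (-(c * M) * t))
          (-(c * M) * Real.exp (-(c * M) * t)) t := by
        have := ((hasDerivAt_id t).const_mul (-(c * M))).exp
        convert this using 1
        simp [id_eq, mul_comm]
        simp only [id_eq, mul_one]; ring
      exact h1.mul h2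
    have hgd' : ∀ t ∈ interior (Set.Icc (0:ℝ) T),
        HasDerivWithinAt g ((Sp' t - Sm' t) * Real.exp (-(c * M) * t)
          + (Sp t - Sm t) * (-(c * M) * Real.exp (-(c * M) * t)))
          (interior (Set.Icc (0:ℝ) T)) t := fun t ht =>
      (hgd t (interior_subset ht)).hasDerivWithinAt
    refine antitoneOn_of_hasDerivWithinAt_nonpos (convex_Icc 0 T)
      (fun t ht => (hgd t ht).continuousAt.continuousWithinAt) hgd' ?_
    intro t ht
    have htIcc : t ∈ Set.Icc (0:ℝ) T := interior_subset ht
    have hmv := (mvt_aux m M c c' f f' hf hf'le hf'abs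
      (hSmmem t htIcc) (hSpmem t htIcc) (hbound t htIcc).2.1).1
    have husp : 0 ≤ Sp t - Sm t := sub_nonneg.2 (hbound t htIcc).2.1
    have h1 : Sp' t - Sm' t ≤ M * (f (Sm t) - f (Sp t)) := hineq t htIcc
    have h2 : M * (f (Sm t) - f (Sp t)) ≤ M * (c * (Sp t - Sm t)) :=
      mul_le_mul_of_nonpos_left hmv hM.le
    have hexp : 0 < Real.exp (-(c * M) * t) := Real.exp_pos _
    nlinarith [mul_le_mul_of_nonneg_right (h1.trans h2) hexp.le]
  have hpart1 : ∀ t ∈ Set.Icc (0:ℝ) T,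
      Sp t - Sm t ≤ (Sp 0 - Sm 0) * Real.exp (-(-c * M) * t) := by
    intro t ht
    have hgt : g t ≤ g 0 := hganti h0T ht ht.1
    have hg0 : g 0 = Sp 0 - Sm 0 := by simp [hg]
    have hprod : Real.exp (-(c * M) * t) * Real.exp (-(-c * M) * t) = 1 := by
      rw [← Real.exp_add]
      have : -(c * M) * t + -(-c * M) * t = 0 := by ring
      rw [this, Real.exp_zero]
    calc Sp t - Sm t = g t * Real.exp (-(-c * M) * t) := by
          simp only [hg]; rw [mul_assoc, hprod, mul_one]
      _ ≤ (Sp 0 - Sm 0) * Real.exp (-(-c * M) * t) := by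
          rw [← hg0]
          exact mul_le_mul_of_nonneg_right hgt (Real.exp_pos _).le
  refine ⟨hpart1, ?_⟩
  intro t ht s a hs1 hs2 ha1 ha2
  have hsMem : s ∈ Set.Icc m M :=
    ⟨le_trans (hSmmem t ht).1 hs1, le_trans hs2 (hSpmem t ht).2⟩
  have h1 := (mvt_aux m M c c' f f' hf hf'le hf'abs (hSmmem t ht) hsMem hs1).1
  have h2 := (mvt_aux m M c c' f f' hf hf'le hf'abs hsMem (hSpmem t ht) hs2).1
  have h3 := (mvt_aux m M c c' f f' hf hf'le hf'abs
    (hSmmem t ht) (hSpmem t ht) (hbound t ht).2.1).2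
  have habs : |f s - a| ≤ f (Sm t) - f (Sp t) := by
    rw [abs_le]
    constructor <;> nlinarith [hc.le]
  have hfin := hpart1 t ht
  calc |f s - a| ≤ f (Sm t) - f (Sp t) := habs
    _ ≤ c' * (Sp t - Sm t) := h3
    _ ≤ c' * ((Sp 0 - Sm 0) * Real.exp (-(-c * M) * t)) :=
        mul_le_mul_of_nonneg_left hfin hc'.le
    _ = (c' * (Sp 0 - Sm 0)) * Real.exp (-(-c * M) * t) := by ring
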